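/- A map f : X → Y over Z in simplicial spaces is a homotopy equivalence over Z if and only if for every map K → Z, the induced map π₀(Map_Z(K, X)) → π₀(Map_Z(K, Y)) is a bijection. -/

import Mathlib

set_option linter.unnecessarySimpa false

open CategoryTheory CategoryTheory.Limits MonoidalCategory Simplicial SSet

namespace KQ

/-- Simplicial spaces (bisimplicial sets): presheaves on `Δ × Δ`.
The first coordinate is the "categorical" (simplicial) direction, the second
the "space" direction. -/
abbrev sSp := (SimplexCategory × SimplexCategory)ᵒᵖ ⥤ Type

noncomputable example : MonoidalClosed sSp := inferInstance

/-- The `n`-th space `X_n` of a simplicial space. -/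
@[simps]
def lvl (X : sSp) (n : SimplexCategory) : SSet where
  obj m := X.obj (Opposite.op (n, m.unop))
  map {m m'} f := X.map (Quiver.Hom.op ((𝟙 n, f.unop) : (n, m'.unop) ⟶ (n, m.unop)))
  map_id m := by
    show X.map (Quiver.Hom.op ((𝟙 n, (𝟙 m).unop) : (n, m.unop) ⟶ (n, m.unop))) = 𝟙 _
    have : ((𝟙 n, (𝟙 m).unop) : (n, m.unop) ⟶ (n, m.unop)) = 𝟙 (n, m.unop) := rfl
    rw [this]; exact X.map_id _
  map_comp {m m' m''} f g := by
    show X.map _ = X.map _ ≫ X.map _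
    rw [← X.map_comp, ← op_comp]
    congr 1

/-- Functoriality of the spaces `X_n` in the simplicial direction. -/
@[simps]
def lmap (X : sSp) {n n' : SimplexCategory} (a : n ⟶ n') : lvl X n' ⟶ lvl X n where
  app m := X.map (Quiver.Hom.op ((a, 𝟙 m.unop) : (n, m.unop) ⟶ (n', m.unop)))
  naturality {m m'} f := by
    show X.map _ ≫ X.map _ = X.map _ ≫ X.map _
    rw [← X.map_comp, ← X.map_comp, ← op_comp, ← op_comp]
    congr 2

/-- The map of spaces `X_n ⟶ Y_n` induced by a map of simplicial spaces. -/
@[simps]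
def lvlMap {X Y : sSp} (f : X ⟶ Y) (n : SimplexCategory) : lvl X n ⟶ lvl Y n where
  app _ := f.app _
  naturality _ _ _ := f.naturality _


/-- A map of simplicial sets is a Kan fibration: RLP w.r.t. horn inclusions. -/
def KanFib {X Y : SSet} (f : X ⟶ Y) : Prop :=
  ∀ (n : ℕ) (i : Fin (n + 2)), HasLiftingProperty (SSet.horn (n + 1) i).ι f

/-- Trivial fibration of simplicial sets: RLP w.r.t. boundary inclusions. -/
def TrivFib {X Y : SSet} (f : X ⟶ Y) : Prop :=
  ∀ (n : ℕ), HasLiftingProperty (SSet.boundary n).ι f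

/-- Anodyne maps (trivial cofibrations of the Kan–Quillen model structure). -/
def Anodyne {A B : SSet} (i : A ⟶ B) : Prop :=
  ∀ ⦃X Y : SSet⦄ (p : X ⟶ Y), KanFib p → HasLiftingProperty i p

/-- Weak homotopy equivalences of simplicial sets: maps factoring as an anodyne
map followed by a trivial fibration. -/
def WeakEquiv {X Y : SSet} (f : X ⟶ Y) : Prop :=
  ∃ (Z : SSet) (i : X ⟶ Z) (p : Z ⟶ Y), Anodyne i ∧ TrivFib p ∧ i ≫ p = f

/-- Weak equivalences of simplicial spaces (Reedy = levelwise). -/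
def sWE {X Y : sSp} (f : X ⟶ Y) : Prop :=
  ∀ n : SimplexCategory, WeakEquiv (lvlMap f n)

/-- Cofibrations of simplicial spaces: levelwise monomorphisms. -/
def sCof {X Y : sSp} (f : X ⟶ Y) : Prop :=
  ∀ n : SimplexCategory, Mono (lvlMap f n)

/-- Reedy fibrations of simplicial spaces, characterized by the right lifting
property against all trivial cofibrations. -/
def sFib {X Y : sSp} (f : X ⟶ Y) : Prop :=
  ∀ ⦃A B : sSp⦄ (i : A ⟶ B), sCof i → sWE i → HasLiftingProperty i f

/-- Reedy trivial fibrations: RLP against all cofibrations. -/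
def sTrivFib {X Y : sSp} (f : X ⟶ Y) : Prop :=
  ∀ ⦃A B : sSp⦄ (i : A ⟶ B), sCof i → HasLiftingProperty i f

/-- The discrete simplicial space `F[n]` (the "categorical" `n`-simplex). -/
@[simps]
def F (n : ℕ) : sSp where
  obj p := p.unop.1 ⟶ ⦋n⦌
  map f := TypeCat.ofHom fun g => f.unop.1 ≫ g

/-- The "space-direction" simplex `Δ[m]` viewed as a simplicial space
(constant in the first variable). -/
@[simps]
def D (m : ℕ) : sSp where
  obj p := p.unop.2 ⟶ ⦋m⦌
  map f := TypeCat.ofHom fun g => f.unop.2 ≫ g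

instance homToZeroSubsingleton (a : SimplexCategory) :
    Subsingleton (a ⟶ (⦋0⦌ : SimplexCategory)) :=
  ⟨fun f g => by
    apply SimplexCategory.Hom.ext'
    apply OrderHom.ext
    funext x
    apply Fin.ext
    have h1 : ((f.toOrderHom x : Fin (⦋0⦌.len + 1)) : ℕ) < 0 + 1 := by
      simpa using (f.toOrderHom x).isLt
    have h2 : ((g.toOrderHom x : Fin (⦋0⦌.len + 1)) : ℕ) < 0 + 1 := by
      simpa using (g.toOrderHom x).isLt
    omega⟩

instance (p : (SimplexCategory × SimplexCategory)ᵒᵖ) : Subsingleton ((F 0).obj p) :=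
  inferInstanceAs (Subsingleton (p.unop.1 ⟶ ⦋0⦌))

instance (p : (SimplexCategory × SimplexCategory)ᵒᵖ) : Subsingleton ((D 0).obj p) :=
  inferInstanceAs (Subsingleton (p.unop.2 ⟶ ⦋0⦌))

/-- `F[0]` is a terminal simplicial space. -/
noncomputable def FZeroIsTerminal : IsTerminal (F 0) :=
  IsTerminal.ofUniqueHom
    (fun X => { app := fun p => TypeCat.ofHom fun _ => SimplexCategory.const p.unop.1 ⦋0⦌ 0
                naturality := fun _ _ _ => by ext; apply Subsingleton.elim })
    (fun X m => by
      apply NatTrans.ext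
      funext p
      ext x
      apply Subsingleton.elim)

/-- `D[0]` is a terminal simplicial space. -/
noncomputable def DZeroIsTerminal : IsTerminal (D 0) :=
  IsTerminal.ofUniqueHom
    (fun X => { app := fun p => TypeCat.ofHom fun _ => SimplexCategory.const p.unop.2 ⦋0⦌ 0
                naturality := fun _ _ _ => by ext; apply Subsingleton.elim })
    (fun X m => by
      apply NatTrans.ext
      funext p
      ext x
      apply Subsingleton.elim)

/-- Endpoint maps `D[0] ⟶ D[1]` (`i = 0, 1`). -/
def dVtx (i : Fin 2) : D 0 ⟶ D 1 where
  app p := TypeCat.ofHom fun g => g ≫ SimplexCategory.δ i.rev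
  naturality _ _ _ := by ext; exact Category.assoc _ _ _

/-- Endpoint inclusions `X ⟶ X ⊗ D[1]` of the cylinder on a simplicial space. -/
noncomputable def cylIncl (i : Fin 2) (X : sSp) : X ⟶ X ⊗ D 1 :=
  CartesianMonoidalCategory.lift (𝟙 X) (DZeroIsTerminal.from X ≫ dVtx i)

/-- Maps `K ⟶ X` over `Z`. -/
def HomOver {K X Z : sSp} (pK : K ⟶ Z) (pX : X ⟶ Z) : Type :=
  { u : K ⟶ X // u ≫ pX = pK }

/-- Two maps over `Z` are (elementarily) homotopic over `Z` if they are joined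
by a fiberwise homotopy with cylinder `K ⊗ D[1]`; i.e., they are joined by an
edge in the mapping space `Map_Z(K, X)`. -/
def HtpyOver {K X Z : sSp} (pK : K ⟶ Z) (pX : X ⟶ Z)
    (u v : HomOver pK pX) : Prop :=
  ∃ h : K ⊗ D 1 ⟶ X,
    h ≫ pX = SemiCartesianMonoidalCategory.fst K (D 1) ≫ pK ∧
    cylIncl 0 K ≫ h = u.1 ∧ cylIncl 1 K ≫ h = v.1

/-- `π₀` of the mapping space `Map_Z(K, X)`: maps over `Z` up to homotopy
over `Z` (`Quot` takes the equivalence closure of the edge relation, which is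
exactly the set of connected components). -/
def pi0MapOver {K X Z : sSp} (pK : K ⟶ Z) (pX : X ⟶ Z) : Type :=
  Quot (HtpyOver pK pX)

/-- `f : X ⟶ Y` over `Z` is a homotopy equivalence over `Z`. -/
noncomputable def HtpyEquivOver {X Y Z : sSp} (pX : X ⟶ Z) (pY : Y ⟶ Z)
    (f : X ⟶ Y) (hf : f ≫ pY = pX) : Prop :=
  ∃ (g : Y ⟶ X) (hg : g ≫ pX = pY),
    Quot.mk (HtpyOver pX pX) ⟨f ≫ g, by rw [Category.assoc, hg, hf]⟩ =
      Quot.mk (HtpyOver pX pX) ⟨𝟙 X, by simp⟩ ∧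
    Quot.mk (HtpyOver pY pY) ⟨g ≫ f, by rw [Category.assoc, hf, hg]⟩ =
      Quot.mk (HtpyOver pY pY) ⟨𝟙 Y, by simp⟩


/-- The map `π₀ Map_Z(K, X) → π₀ Map_Z(K, Y)` induced by `f : X ⟶ Y` over `Z`. -/
noncomputable def pi0CompMap {K X Y Z : sSp} (pK : K ⟶ Z) (pX : X ⟶ Z)
    (pY : Y ⟶ Z) (f : X ⟶ Y) (hf : f ≫ pY = pX) :
    pi0MapOver pK pX → pi0MapOver pK pY :=
  Quot.map
    (fun u => ⟨u.1 ≫ f, by rw [Category.assoc, hf, u.2]⟩)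
    (fun u v hr => by
      obtain ⟨h, h0, h1, h2⟩ := hr
      exact ⟨h ≫ f,
        by rw [Category.assoc, hf, h0],
        by rw [← Category.assoc, h1],
        by rw [← Category.assoc, h2]⟩)

/-!
STATEMENT 7: A map `f : X ⟶ Y` over `Z` in simplicial spaces is a homotopy
equivalence over `Z` if and only if for every map `K ⟶ Z` the induced map
`π₀ Map_Z(K, X) → π₀ Map_Z(K, Y)` is a bijection.
-/

lemma cylIncl_naturality {K X : sSp} (u : K ⟶ X) (i : Fin 2) :
    cylIncl i K ≫ (u ⊗ₘ 𝟙 (D 1)) = u ≫ cylIncl i X := by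
  apply CartesianMonoidalCategory.hom_ext
  · simp [cylIncl]
  · simp only [cylIncl, MonoidalCategory.tensorHom_def, Category.assoc,
      CartesianMonoidalCategory.whiskerLeft_snd, CartesianMonoidalCategory.whiskerRight_snd,
      CartesianMonoidalCategory.lift_snd, Category.comp_id]
    rw [← Category.assoc,
      DZeroIsTerminal.hom_ext (u ≫ DZeroIsTerminal.from X) (DZeroIsTerminal.from K)]

/-- Precomposition with a map over `Z` induces a map on `π₀` of mapping
spaces over `Z`. -/
noncomputable def pi0PrecompMap {K X W Z : sSp} (pK : K ⟶ Z) (pX : X ⟶ Z)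
    (pW : W ⟶ Z) (u : K ⟶ X) (hu : u ≫ pX = pK) :
    pi0MapOver pX pW → pi0MapOver pK pW :=
  Quot.map
    (fun v => ⟨u ≫ v.1, by rw [Category.assoc, v.2, hu]⟩)
    (fun v w hr => by
      obtain ⟨h, h0, h1, h2⟩ := hr
      refine ⟨(u ⊗ₘ 𝟙 (D 1)) ≫ h, ?_, ?_, ?_⟩
      · rw [Category.assoc, h0, ← Category.assoc,
          CartesianMonoidalCategory.tensorHom_fst, Category.assoc, hu]
      · rw [← Category.assoc, cylIncl_naturality, Category.assoc, h1]
      · rw [← Category.assoc, cylIncl_naturality, Category.assoc, h2])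

lemma quot_mk_congr {K X Z : sSp} (pK : K ⟶ Z) (pX : X ⟶ Z) {a b : K ⟶ X}
    (ha : a ≫ pX = pK) (hb : b ≫ pX = pK) (e : a = b) :
    Quot.mk (HtpyOver pK pX) ⟨a, ha⟩ = Quot.mk (HtpyOver pK pX) ⟨b, hb⟩ := by
  subst e; rfl

lemma precomp_quot_eq {K X W Z : sSp} (pK : K ⟶ Z) (pX : X ⟶ Z) (pW : W ⟶ Z)
    (u : K ⟶ X) (hu : u ≫ pX = pK) {v w : HomOver pX pW}
    (h : Quot.mk (HtpyOver pX pW) v = Quot.mk (HtpyOver pX pW) w) :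
    Quot.mk (HtpyOver pK pW) ⟨u ≫ v.1, by rw [Category.assoc, v.2, hu]⟩ =
      Quot.mk (HtpyOver pK pW) ⟨u ≫ w.1, by rw [Category.assoc, w.2, hu]⟩ :=
  congrArg (pi0PrecompMap pK pX pW u hu) h

theorem htpyEquivOver_iff_pi0_bijective {X Y Z : sSp}
    (pX : X ⟶ Z) (pY : Y ⟶ Z) (f : X ⟶ Y) (hf : f ≫ pY = pX) :
    HtpyEquivOver pX pY f hf ↔
      ∀ (K : sSp) (pK : K ⟶ Z),
        Function.Bijective (pi0CompMap pK pX pY f hf) := by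
  constructor
  · rintro ⟨g, hg, hfg, hgf⟩ K pK
    -- key cancellation lemmas
    have keyX : ∀ u : HomOver pK pX,
        Quot.mk (HtpyOver pK pX)
          ⟨(u.1 ≫ f) ≫ g, by rw [Category.assoc, Category.assoc, hg, hf, u.2]⟩ =
        Quot.mk (HtpyOver pK pX) u := by
      intro u
      have h := precomp_quot_eq pK pX pX u.1 u.2 hfg
      refine Eq.trans ?_ (h.trans ?_)
      · exact quot_mk_congr _ _ _ _ (by rw [Category.assoc])
      · exact (quot_mk_congr _ _ _ _ (by rw [Category.comp_id])).trans
          (congrArg _ (Subtype.ext rfl))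
    have keyY : ∀ v : HomOver pK pY,
        Quot.mk (HtpyOver pK pY)
          ⟨(v.1 ≫ g) ≫ f, by rw [Category.assoc, Category.assoc, hf, hg, v.2]⟩ =
        Quot.mk (HtpyOver pK pY) v := by
      intro v
      have h := precomp_quot_eq pK pY pY v.1 v.2 hgf
      refine Eq.trans ?_ (h.trans ?_)
      · exact quot_mk_congr _ _ _ _ (by rw [Category.assoc])
      · exact (quot_mk_congr _ _ _ _ (by rw [Category.comp_id])).trans
          (congrArg _ (Subtype.ext rfl))
    constructor
    · intro a b hab
      obtain ⟨u, rfl⟩ := Quot.exists_rep a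
      obtain ⟨v, rfl⟩ := Quot.exists_rep b
      have h2 := congrArg (pi0CompMap pK pY pX g hg) hab
      exact (keyX u).symm.trans (h2.trans (keyX v))
    · intro b
      obtain ⟨v, rfl⟩ := Quot.exists_rep b
      exact ⟨Quot.mk _ ⟨v.1 ≫ g, by rw [Category.assoc, hg, v.2]⟩, keyY v⟩
  · intro H
    -- surjectivity at K = Y produces a homotopy inverse
    obtain ⟨a, ha⟩ := (H Y pY).2 (Quot.mk _ ⟨𝟙 Y, by simp⟩)
    obtain ⟨u, rfl⟩ := Quot.exists_rep a
    -- ha : [u.1 ≫ f] = [𝟙 Y]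
    refine ⟨u.1, u.2, ?_, ?_⟩
    · -- [f ≫ u.1] = [𝟙 X] : use injectivity at K = X
      apply (H X pX).1
      -- images: [(f ≫ u.1) ≫ f] and [𝟙 X ≫ f]
      have h := precomp_quot_eq pX pY pY f hf ha
      -- h : [f ≫ u.1 ≫ f] = [f ≫ 𝟙 Y]
      refine Eq.trans ?_ (h.trans ?_)
      · exact quot_mk_congr _ _ _ _ (by rw [Category.assoc])
      · exact quot_mk_congr _ _ _ _ (by rw [Category.comp_id, Category.id_comp])
    · exact (quot_mk_congr _ _ _ _ rfl).trans ha

end KQ
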